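/- (Covering relations detect periodic orbits.) Let N₁, …, N_k be pairwise disjoint h-sets in ℝ², let f be a continuous map defined on ⋃_{i=1}^k |N_i| with values in ℝ², and let M be a k×k matrix with entries in {0,1} such that whenever M_{ij} = 1, the h-set N_i f-covers N_j. If (c_j)_{j∈ℤ} is a biinfinite sequence with values in {1, …, k} satisfying M_{c_j c_{j+1}} = 1 for all j ∈ ℤ, and (c_j) is periodic with principal (least) period n, then there exists a point x ∈ |N_{c_0}| such that f^j(x) ∈ |N_{c_j}| for all j ≥ 0, f^n(x) = x, and n is the principal period of x under f (i.e. f^m(x) ≠ x for 0 < m < n). -/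

import Mathlib

open Set

/-- An h-set in `ℝ²`: a rectangle `[a,b] × [c,d]` with `a < b` and `c < d`. -/
structure HSet where
  a : ℝ
  b : ℝ
  c : ℝ
  d : ℝ
  hab : a < b
  hcd : c < d

/-- The support `|N| = [a,b] × [c,d]` of an h-set. -/
def HSet.box (N : HSet) : Set (ℝ × ℝ) := Icc N.a N.b ×ˢ Icc N.c N.d

/-- The left edge `N^{le} = {a} × [c,d]`. -/
def HSet.leftEdge (N : HSet) : Set (ℝ × ℝ) := {N.a} ×ˢ Icc N.c N.d

/-- The right edge `N^{re} = {b} × [c,d]`. -/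
def HSet.rightEdge (N : HSet) : Set (ℝ × ℝ) := {N.b} ×ˢ Icc N.c N.d

/-- The left side `N^{l} = (-∞,a) × [c,d]`. -/
def HSet.leftSide (N : HSet) : Set (ℝ × ℝ) := Iio N.a ×ˢ Icc N.c N.d

/-- The right side `N^{r} = (b,∞) × [c,d]`. -/
def HSet.rightSide (N : HSet) : Set (ℝ × ℝ) := Ioi N.b ×ˢ Icc N.c N.d

/-- The horizontal strip `N^{s} = ℝ × (c,d)`. -/
def HSet.strip (N : HSet) : Set (ℝ × ℝ) := univ ×ˢ Ioo N.c N.d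

/-- The covering relation `N₁ ⟹f N₂`: `f(|N₁|) ⊆ N₂^s` and the left/right edges of `N₁`
are mapped to the left/right (or right/left) sides of `N₂`. -/
def Covers (f : ℝ × ℝ → ℝ × ℝ) (N₁ N₂ : HSet) : Prop :=
  MapsTo f N₁.box N₂.strip ∧
  ((MapsTo f N₁.rightEdge N₂.rightSide ∧ MapsTo f N₁.leftEdge N₂.leftSide) ∨
   (MapsTo f N₁.rightEdge N₂.leftSide ∧ MapsTo f N₁.leftEdge N₂.rightSide))

namespace CRPO


/-- indicator of a `{1,2}`-edge. -/
def ee (x y : Fin 3) : ZMod 2 := if (x = 1 ∧ y = 2) ∨ (x = 2 ∧ y = 1) then 1 else 0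

def chi (x : Fin 3) : ZMod 2 := if x = 2 then 1 else 0

lemma tel (a : ℕ → ZMod 2) (K : ℕ) :
    ∑ j ∈ Finset.range K, (a j + a (j + 1)) = a 0 + a K := by
  induction K with
  | zero => simp [CharTwo.add_self_eq_zero]
  | succ K ih =>
    rw [Finset.sum_range_succ, ih]
    have : a 0 + a K + (a K + a (K + 1)) = a 0 + a (K + 1) + (a K + a K) := by ring
    rw [this, CharTwo.add_self_eq_zero, add_zero]

lemma ee_comm : ∀ x y, ee x y = ee y x := by decide
lemma ee_zero : ∀ x y : Fin 3, x ≠ 1 → y ≠ 1 → ee x y = 0 := by decide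
lemma ee_zero' : ∀ x y : Fin 3, x ≠ 2 → y ≠ 2 → ee x y = 0 := by decide
lemma ee_chi : ∀ x y : Fin 3, x ≠ 0 → y ≠ 0 → ee x y = chi x + chi y := by decide
lemma full_of_ne : ∀ x y z : Fin 3, ee x y + ee y z + ee x z ≠ 0 →
    (x = 0 ∨ y = 0 ∨ z = 0) ∧ (x = 1 ∨ y = 1 ∨ z = 1) ∧ (x = 2 ∨ y = 2 ∨ z = 2) := by decide

set_option maxHeartbeats 1000000 in
/-- Sperner-type lemma on the triangulated `K × K` grid. -/
lemma sperner (K : ℕ) (hK : 0 < K) (l : ℕ → ℕ → Fin 3)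
    (hbot : ∀ i ≤ K, l i 0 ≠ 1) (htop : ∀ i ≤ K, l i K ≠ 2)
    (hleft : ∀ j ≤ K, l 0 j ≠ 0) (hright : ∀ j ≤ K, l K j = 0) :
    ∃ i j : ℕ, i < K ∧ j < K ∧
      ∃ p₀ p₁ p₂ : ℕ × ℕ,
        p₀ ∈ ({(i,j), (i+1,j), (i,j+1), (i+1,j+1)} : Set (ℕ × ℕ)) ∧
        p₁ ∈ ({(i,j), (i+1,j), (i,j+1), (i+1,j+1)} : Set (ℕ × ℕ)) ∧
        p₂ ∈ ({(i,j), (i+1,j), (i,j+1), (i+1,j+1)} : Set (ℕ × ℕ)) ∧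
        l p₀.1 p₀.2 = 0 ∧ l p₁.1 p₁.2 = 1 ∧ l p₂.1 p₂.2 = 2 := by
  set H : ℕ → ℕ → ZMod 2 := fun i j => ee (l i j) (l (i+1) j) with hH
  set V : ℕ → ℕ → ZMod 2 := fun i j => ee (l i j) (l i (j+1)) with hV
  set tL : ℕ → ℕ → ZMod 2 := fun i j =>
    ee (l i j) (l (i+1) j) + ee (l (i+1) j) (l (i+1) (j+1)) + ee (l i j) (l (i+1) (j+1)) with htL
  set tU : ℕ → ℕ → ZMod 2 := fun i j =>
    ee (l i j) (l i (j+1)) + ee (l i (j+1)) (l (i+1) (j+1)) + ee (l i j) (l (i+1) (j+1)) with htU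
  have key : ∀ i j, tL i j + tU i j = (H i j + H i (j+1)) + (V i j + V (i+1) j) := by
    intro i j
    simp only [htL, htU, hH, hV]
    have h2 : ee (l i j) (l (i+1) (j+1)) + ee (l i j) (l (i+1) (j+1)) = 0 :=
      CharTwo.add_self_eq_zero _
    have hc1 : ee (l (i+1) j) (l (i+1) (j+1)) = V (i+1) j := rfl
    have hc2 : ee (l i (j+1)) (l (i+1) (j+1)) = H i (j+1) := rfl
    linear_combination h2
  have hS : ∑ i ∈ Finset.range K, ∑ j ∈ Finset.range K, (tL i j + tU i j) = 1 := by
    have : ∀ i j, tL i j + tU i j = (H i j + H i (j+1)) + (V i j + V (i+1) j) := key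
    calc ∑ i ∈ Finset.range K, ∑ j ∈ Finset.range K, (tL i j + tU i j)
        = ∑ i ∈ Finset.range K, ∑ j ∈ Finset.range K, ((H i j + H i (j+1)) + (V i j + V (i+1) j)) := by
          simp_rw [key]
      _ = (∑ i ∈ Finset.range K, ∑ j ∈ Finset.range K, (H i j + H i (j+1)))
          + ∑ i ∈ Finset.range K, ∑ j ∈ Finset.range K, (V i j + V (i+1) j) := by
          rw [← Finset.sum_add_distrib]; simp_rw [Finset.sum_add_distrib]
      _ = (∑ i ∈ Finset.range K, (H i 0 + H i K))
          + ∑ j ∈ Finset.range K, (V 0 j + V K j) := by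
          rw [Finset.sum_comm (s := Finset.range K) (t := Finset.range K)
            (f := fun i j => V i j + V (i+1) j)]
          congr 1
          · exact Finset.sum_congr rfl fun i _ => tel (fun j => H i j) K
          · exact Finset.sum_congr rfl fun j _ => tel (fun i => V i j) K
      _ = 0 + ∑ j ∈ Finset.range K, V 0 j := by
          congr 1
          · apply Finset.sum_eq_zero
            intro i hi
            have hi' : i + 1 ≤ K := Finset.mem_range.mp hi
            rw [hH]
            simp only
            rw [ee_zero _ _ (hbot i (le_of_lt (Finset.mem_range.mp hi))) (hbot (i+1) hi'),
              ee_zero' _ _ (htop i (le_of_lt (Finset.mem_range.mp hi))) (htop (i+1) hi'),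
              add_zero]
          · apply Finset.sum_congr rfl
            intro j hj
            have hj' : j + 1 ≤ K := Finset.mem_range.mp hj
            have : V K j = 0 := by
              rw [hV]; simp only
              rw [ee_zero' _ _ (by rw [hright j (le_of_lt (Finset.mem_range.mp hj))]; decide)
                (by rw [hright (j+1) hj']; decide)]
            rw [this, add_zero]
      _ = 1 := by
          rw [zero_add]
          have : ∀ j ≤ K, V 0 j = chi (l 0 j) + chi (l 0 (j+1)) ∨ j = K := by
            intro j hj
            rcases lt_or_eq_of_le hj with h | h
            · exact Or.inl (ee_chi _ _ (hleft j hj) (hleft (j+1) h))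
            · exact Or.inr h
          have hsum : ∑ j ∈ Finset.range K, V 0 j
              = ∑ j ∈ Finset.range K, (chi (l 0 j) + chi (l 0 (j+1))) := by
            apply Finset.sum_congr rfl
            intro j hj
            have hj1 : j < K := Finset.mem_range.mp hj
            exact ee_chi _ _ (hleft j (le_of_lt hj1)) (hleft (j+1) hj1)
          rw [hsum, tel (fun j => chi (l 0 j)) K]
          have e2 : ∀ x : Fin 3, x ≠ 0 → x ≠ 1 → x = 2 := by decide
          have e1 : ∀ x : Fin 3, x ≠ 0 → x ≠ 2 → x = 1 := by decide
          rw [e2 _ (hleft 0 (Nat.zero_le K)) (hbot 0 (Nat.zero_le K)),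
            e1 _ (hleft K le_rfl) (htop 0 (Nat.zero_le K))]
          decide
  -- extract a nonzero cell
  have hex : ∃ i j : ℕ, i < K ∧ j < K ∧ (tL i j ≠ 0 ∨ tU i j ≠ 0) := by
    by_contra hcon
    push_neg at hcon
    rw [Finset.sum_eq_zero (fun i hi => Finset.sum_eq_zero (fun j hj => by
      obtain ⟨h1, h2⟩ := hcon i j (Finset.mem_range.mp hi) (Finset.mem_range.mp hj)
      rw [h1, h2, add_zero]))] at hS
    exact one_ne_zero hS.symm
  obtain ⟨i, j, hi, hj, hor⟩ := hex
  refine ⟨i, j, hi, hj, ?_⟩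
  have corner : ∀ p : ℕ × ℕ, (p = (i,j) ∨ p = (i+1,j) ∨ p = (i,j+1) ∨ p = (i+1,j+1)) →
      p ∈ ({(i,j), (i+1,j), (i,j+1), (i+1,j+1)} : Set (ℕ × ℕ)) := by
    intro p hp; simpa using hp
  rcases hor with h | h
  · obtain ⟨h0, h1, h2⟩ := full_of_ne _ _ _ h
    have c0 : ∃ p : ℕ × ℕ, p ∈ ({(i,j), (i+1,j), (i,j+1), (i+1,j+1)} : Set (ℕ × ℕ)) ∧
        l p.1 p.2 = 0 := by
      rcases h0 with h' | h' | h'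
      exacts [⟨(i,j), corner _ (by tauto), h'⟩, ⟨(i+1,j), corner _ (by tauto), h'⟩,
        ⟨(i+1,j+1), corner _ (by tauto), h'⟩]
    have c1 : ∃ p : ℕ × ℕ, p ∈ ({(i,j), (i+1,j), (i,j+1), (i+1,j+1)} : Set (ℕ × ℕ)) ∧
        l p.1 p.2 = 1 := by
      rcases h1 with h' | h' | h'
      exacts [⟨(i,j), corner _ (by tauto), h'⟩, ⟨(i+1,j), corner _ (by tauto), h'⟩,
        ⟨(i+1,j+1), corner _ (by tauto), h'⟩]
    have c2 : ∃ p : ℕ × ℕ, p ∈ ({(i,j), (i+1,j), (i,j+1), (i+1,j+1)} : Set (ℕ × ℕ)) ∧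
        l p.1 p.2 = 2 := by
      rcases h2 with h' | h' | h'
      exacts [⟨(i,j), corner _ (by tauto), h'⟩, ⟨(i+1,j), corner _ (by tauto), h'⟩,
        ⟨(i+1,j+1), corner _ (by tauto), h'⟩]
    obtain ⟨p0, m0, e0⟩ := c0; obtain ⟨p1, m1, e1⟩ := c1; obtain ⟨p2, m2, e2⟩ := c2
    exact ⟨p0, p1, p2, m0, m1, m2, e0, e1, e2⟩
  · obtain ⟨h0, h1, h2⟩ := full_of_ne _ _ _ h
    have c0 : ∃ p : ℕ × ℕ, p ∈ ({(i,j), (i+1,j), (i,j+1), (i+1,j+1)} : Set (ℕ × ℕ)) ∧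
        l p.1 p.2 = 0 := by
      rcases h0 with h' | h' | h'
      exacts [⟨(i,j), corner _ (by tauto), h'⟩, ⟨(i,j+1), corner _ (by tauto), h'⟩,
        ⟨(i+1,j+1), corner _ (by tauto), h'⟩]
    have c1 : ∃ p : ℕ × ℕ, p ∈ ({(i,j), (i+1,j), (i,j+1), (i+1,j+1)} : Set (ℕ × ℕ)) ∧
        l p.1 p.2 = 1 := by
      rcases h1 with h' | h' | h'
      exacts [⟨(i,j), corner _ (by tauto), h'⟩, ⟨(i,j+1), corner _ (by tauto), h'⟩,
        ⟨(i+1,j+1), corner _ (by tauto), h'⟩]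
    have c2 : ∃ p : ℕ × ℕ, p ∈ ({(i,j), (i+1,j), (i,j+1), (i+1,j+1)} : Set (ℕ × ℕ)) ∧
        l p.1 p.2 = 2 := by
      rcases h2 with h' | h' | h'
      exacts [⟨(i,j), corner _ (by tauto), h'⟩, ⟨(i,j+1), corner _ (by tauto), h'⟩,
        ⟨(i+1,j+1), corner _ (by tauto), h'⟩]
    obtain ⟨p0, m0, e0⟩ := c0; obtain ⟨p1, m1, e1⟩ := c1; obtain ⟨p2, m2, e2⟩ := c2
    exact ⟨p0, p1, p2, m0, m1, m2, e0, e1, e2⟩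


/-- The Poincaré–Miranda theorem on a rectangle, with strict boundary inequalities. -/
lemma miranda (A B C D : ℝ) (hAB : A < B) (hCD : C < D) (F : ℝ × ℝ → ℝ × ℝ)
    (hF : ContinuousOn F (Icc A B ×ˢ Icc C D))
    (hl : ∀ y ∈ Icc C D, (F (A, y)).1 < 0)
    (hr : ∀ y ∈ Icc C D, 0 < (F (B, y)).1)
    (hb : ∀ x ∈ Icc A B, (F (x, C)).2 < 0)
    (ht : ∀ x ∈ Icc A B, 0 < (F (x, D)).2) :
    ∃ p ∈ Icc A B ×ˢ Icc C D, F p = 0 := by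
  set R : Set (ℝ × ℝ) := Icc A B ×ˢ Icc C D with hR
  have hRc : IsCompact R := (isCompact_Icc).prod isCompact_Icc
  have hRne : R.Nonempty := ⟨(A, C), by
    constructor <;> simp [hAB.le, hCD.le]⟩
  obtain ⟨pm, hpm, hmin⟩ := hRc.exists_isMinOn hRne hF.norm
  refine ⟨pm, hpm, ?_⟩
  rw [← norm_eq_zero]
  refine le_antisymm ?_ (norm_nonneg _)
  refine le_of_forall_pos_le_add ?_
  intro ε hε
  rw [zero_add]
  -- uniform continuity
  obtain ⟨δ, hδ, hunif⟩ := Metric.uniformContinuousOn_iff_le.mp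
    (hRc.uniformContinuousOn_of_continuous hF) ε hε
  -- grid size
  obtain ⟨K, hK1, hKx, hKy⟩ : ∃ K : ℕ, 0 < K ∧ (B - A) / K ≤ δ ∧ (D - C) / K ≤ δ := by
    obtain ⟨K, hK⟩ := exists_nat_gt (max ((B - A) / δ) ((D - C) / δ))
    have h0 : (0:ℝ) ≤ (B - A) / δ := div_nonneg (by linarith) hδ.le
    have hK0 : 0 < (K : ℝ) := lt_of_le_of_lt (h0.trans (le_max_left _ _)) hK
    have hx : B - A ≤ K * δ := by
      have h := (le_max_left ((B - A) / δ) ((D - C) / δ)).trans hK.le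
      rwa [div_le_iff₀ hδ] at h
    have hy : D - C ≤ K * δ := by
      have h := (le_max_right ((B - A) / δ) ((D - C) / δ)).trans hK.le
      rwa [div_le_iff₀ hδ] at h
    refine ⟨K, by exact_mod_cast hK0, ?_, ?_⟩
    · rw [div_le_iff₀ hK0]; linarith [mul_comm (K:ℝ) δ]
    · rw [div_le_iff₀ hK0]; linarith [mul_comm (K:ℝ) δ]
  set sx := (B - A) / K with hsx
  set sy := (D - C) / K with hsy
  have hsx0 : 0 ≤ sx := div_nonneg (by linarith) (Nat.cast_nonneg K)
  have hsy0 : 0 ≤ sy := div_nonneg (by linarith) (Nat.cast_nonneg K)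
  have hKne : (K : ℝ) ≠ 0 := Nat.cast_ne_zero.mpr hK1.ne'
  set P : ℕ → ℕ → ℝ × ℝ := fun i j => (A + i * sx, C + j * sy) with hP
  have hmemx : ∀ i ≤ K, A + i * sx ∈ Icc A B := by
    intro i hi
    constructor
    · nlinarith [mul_nonneg (Nat.cast_nonneg (α := ℝ) i) hsx0]
    · have : (i : ℝ) * sx ≤ K * sx := by
        apply mul_le_mul_of_nonneg_right _ hsx0
        exact_mod_cast hi
      have hKs : (K : ℝ) * sx = B - A := by rw [hsx]; field_simp
      linarith
  have hmemy : ∀ j ≤ K, C + j * sy ∈ Icc C D := by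
    intro j hj
    constructor
    · nlinarith [mul_nonneg (Nat.cast_nonneg (α := ℝ) j) hsy0]
    · have : (j : ℝ) * sy ≤ K * sy := by
        apply mul_le_mul_of_nonneg_right _ hsy0
        exact_mod_cast hj
      have hKs : (K : ℝ) * sy = D - C := by rw [hsy]; field_simp
      linarith
  have hmem : ∀ i ≤ K, ∀ j ≤ K, P i j ∈ R := fun i hi j hj => ⟨hmemx i hi, hmemy j hj⟩
  have hPK1 : ∀ j, (P K j).1 = B := by
    intro j; show A + K * sx = B
    rw [hsx]; field_simp; ring
  have hPjK : ∀ i, (P i K).2 = D := by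
    intro i; show C + K * sy = D
    rw [hsy]; field_simp; ring
  have hP01 : ∀ j, (P 0 j).1 = A := by intro j; simp [hP]
  have hPj0 : ∀ i, (P i 0).2 = C := by intro i; simp [hP]
  -- labels
  set l : ℕ → ℕ → Fin 3 := fun i j =>
    if 0 < (F (P i j)).1 then 0 else if 0 < (F (P i j)).2 then 1 else 2 with hldef
  obtain ⟨i, j, hi, hj, p0, p1, p2, m0, m1, m2, e0, e1, e2⟩ :=
    sperner K hK1 l
      (by -- bottom
        intro i hi
        simp only [hldef]
        split
        · decide
        · rw [if_neg]
          · decide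
          · have : P i 0 = ((P i 0).1, C) := by rw [← hPj0 i]
            rw [this]
            exact not_lt.mpr (hb _ (hmemx i hi)).le)
      (by -- top
        intro i hi
        simp only [hldef]
        split
        · decide
        · rw [if_pos]
          · decide
          · have : P i K = ((P i K).1, D) := by rw [← hPjK i]
            rw [this]
            exact ht _ (hmemx i hi))
      (by -- left
        intro j hj
        simp only [hldef]
        rw [if_neg]
        · split <;> decide
        · have : P 0 j = (A, (P 0 j).2) := by rw [← hP01 j]
          rw [this]
          exact not_lt.mpr (hl _ (hmemy j hj)).le)
      (by -- right
        intro j hj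
        simp only [hldef]
        rw [if_pos]
        have : P K j = (B, (P K j).2) := by rw [← hPK1 j]
        rw [this]
        exact hr _ (hmemy j hj))
  -- corner coordinates
  have hcorn : ∀ p : ℕ × ℕ, p ∈ ({(i,j), (i+1,j), (i,j+1), (i+1,j+1)} : Set (ℕ × ℕ)) →
      (p.1 = i ∨ p.1 = i + 1) ∧ (p.2 = j ∨ p.2 = j + 1) := by
    intro p hp
    simp only [Set.mem_insert_iff, Set.mem_singleton_iff] at hp
    rcases hp with rfl | rfl | rfl | rfl <;> simp
  have hle : ∀ p : ℕ × ℕ, p ∈ ({(i,j), (i+1,j), (i,j+1), (i+1,j+1)} : Set (ℕ × ℕ)) →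
      p.1 ≤ K ∧ p.2 ≤ K := by
    intro p hp
    obtain ⟨h1, h2⟩ := hcorn p hp
    constructor
    · rcases h1 with h | h <;> omega
    · rcases h2 with h | h <;> omega
  -- distance between corners of a cell
  have hdist : ∀ p q : ℕ × ℕ, p ∈ ({(i,j), (i+1,j), (i,j+1), (i+1,j+1)} : Set (ℕ × ℕ)) →
      q ∈ ({(i,j), (i+1,j), (i,j+1), (i+1,j+1)} : Set (ℕ × ℕ)) →
      dist (P p.1 p.2) (P q.1 q.2) ≤ δ := by
    intro p q hp hq
    obtain ⟨hp1, hp2⟩ := hcorn p hp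
    obtain ⟨hq1, hq2⟩ := hcorn q hq
    rw [Prod.dist_eq]
    have hx : dist (P p.1 p.2).1 (P q.1 q.2).1 ≤ δ := by
      show dist (A + p.1 * sx) (A + q.1 * sx) ≤ δ
      rw [Real.dist_eq]
      have h1 : |(p.1 : ℝ) - q.1| ≤ 1 := by
        rw [abs_le]
        constructor <;> [skip; skip] <;>
          (rcases hp1 with h | h <;> rcases hq1 with h' | h' <;>
            rw [h, h'] <;> push_cast <;> linarith)
      have heq : (A + p.1 * sx) - (A + q.1 * sx) = ((p.1 : ℝ) - q.1) * sx := by ring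
      rw [heq, abs_mul, abs_of_nonneg hsx0]
      calc |(p.1 : ℝ) - q.1| * sx ≤ 1 * sx := mul_le_mul_of_nonneg_right h1 hsx0
        _ = sx := one_mul _
        _ ≤ δ := hKx
    have hy : dist (P p.1 p.2).2 (P q.1 q.2).2 ≤ δ := by
      show dist (C + p.2 * sy) (C + q.2 * sy) ≤ δ
      rw [Real.dist_eq]
      have h1 : |(p.2 : ℝ) - q.2| ≤ 1 := by
        rw [abs_le]
        constructor <;> [skip; skip] <;>
          (rcases hp2 with h | h <;> rcases hq2 with h' | h' <;>
            rw [h, h'] <;> push_cast <;> linarith)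
      have heq : (C + p.2 * sy) - (C + q.2 * sy) = ((p.2 : ℝ) - q.2) * sy := by ring
      rw [heq, abs_mul, abs_of_nonneg hsy0]
      calc |(p.2 : ℝ) - q.2| * sy ≤ 1 * sy := mul_le_mul_of_nonneg_right h1 hsy0
        _ = sy := one_mul _
        _ ≤ δ := hKy
    exact max_le hx hy
  set q0 := P p0.1 p0.2 with hq0
  set q1 := P p1.1 p1.2 with hq1
  set q2 := P p2.1 p2.2 with hq2
  have hq0R : q0 ∈ R := hmem _ (hle p0 m0).1 _ (hle p0 m0).2
  have hq1R : q1 ∈ R := hmem _ (hle p1 m1).1 _ (hle p1 m1).2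
  have hq2R : q2 ∈ R := hmem _ (hle p2 m2).1 _ (hle p2 m2).2
  -- decode labels
  have hF0 : 0 < (F q0).1 := by
    by_contra h
    simp only [hldef, hq0] at e0 ⊢
    rw [if_neg h] at e0
    revert e0; split <;> decide
  have hF1a : ¬ 0 < (F q1).1 ∧ 0 < (F q1).2 := by
    simp only [hldef, hq1] at e1
    constructor
    · intro h; rw [if_pos h] at e1; exact absurd e1 (by decide)
    · by_contra h
      by_cases h' : 0 < (F q1).1
      · rw [if_pos h'] at e1; exact absurd e1 (by decide)
      · rw [if_neg h', if_neg h] at e1; exact absurd e1 (by decide)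
  have hF2a : ¬ 0 < (F q2).1 ∧ ¬ 0 < (F q2).2 := by
    simp only [hldef, hq2] at e2
    constructor
    · intro h; rw [if_pos h] at e2; exact absurd e2 (by decide)
    · intro h
      by_cases h' : 0 < (F q2).1
      · rw [if_pos h'] at e2; exact absurd e2 (by decide)
      · rw [if_neg h', if_pos h] at e2; exact absurd e2 (by decide)
  -- estimates at q1
  have hd01 : dist (F q0) (F q1) ≤ ε := hunif _ hq0R _ hq1R (hdist p0 p1 m0 m1)
  have hd21 : dist (F q2) (F q1) ≤ ε := hunif _ hq2R _ hq1R (hdist p2 p1 m2 m1)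
  have habs1 : |(F q1).1| ≤ ε := by
    rw [abs_le]
    constructor
    · have h1 : dist (F q0).1 (F q1).1 ≤ dist (F q0) (F q1) := by
        rw [Prod.dist_eq]; exact le_max_left _ _
      rw [Real.dist_eq] at h1
      have := abs_le.mp (h1.trans hd01)
      linarith [hF0]
    · linarith [not_lt.mp hF1a.1, hε.le]
  have habs2 : |(F q1).2| ≤ ε := by
    rw [abs_le]
    constructor
    · linarith [hF1a.2, hε.le]
    · have : |(F q2).2 - (F q1).2| ≤ ε := by
        have h1 : dist (F q2).2 (F q1).2 ≤ dist (F q2) (F q1) := by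
          rw [Prod.dist_eq]; exact le_max_right _ _
        rw [Real.dist_eq] at h1
        linarith
      have := abs_le.mp this
      linarith [not_lt.mp hF2a.2]
  -- conclude
  have : ‖F q1‖ ≤ ε := by
    rw [Prod.norm_def]
    exact max_le (by rwa [Real.norm_eq_abs]) (by rwa [Real.norm_eq_abs])
  exact le_trans (hmin hq1R) this


/-- Clamp the first coordinate into `[a, b]`. -/
def clampX (N : HSet) (p : ℝ × ℝ) : ℝ × ℝ := (min N.b (max N.a p.1), p.2)

lemma continuous_clampX (N : HSet) : Continuous (clampX N) := by
  unfold clampX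
  fun_prop

lemma clampX_mem_box (N : HSet) {p : ℝ × ℝ} (hp : p ∈ N.strip) : clampX N p ∈ N.box := by
  obtain ⟨-, h2⟩ := hp
  exact ⟨⟨le_min N.hab.le (le_max_left _ _), min_le_left _ _⟩, ⟨h2.1.le, h2.2.le⟩⟩

lemma clampX_of_mem (N : HSet) {p : ℝ × ℝ} (hp : p.1 ∈ Icc N.a N.b) : clampX N p = p := by
  unfold clampX
  rw [max_eq_right hp.1, min_eq_right hp.2]

lemma clampX_leftSide (N : HSet) {p : ℝ × ℝ} (hp : p ∈ N.leftSide) :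
    clampX N p ∈ N.leftEdge := by
  obtain ⟨h1, h2⟩ := hp
  have : max N.a p.1 = N.a := max_eq_left (le_of_lt h1)
  refine ⟨?_, h2⟩
  simp only [clampX, this, min_eq_right N.hab.le, mem_singleton_iff]

lemma clampX_rightSide (N : HSet) {p : ℝ × ℝ} (hp : p ∈ N.rightSide) :
    clampX N p ∈ N.rightEdge := by
  obtain ⟨h1, h2⟩ := hp
  refine ⟨?_, h2⟩
  have h3 : N.b ≤ max N.a p.1 := le_max_of_le_right (le_of_lt h1)
  simp only [clampX, min_eq_left h3, mem_singleton_iff]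

/-- The clamped iteration along a sequence of h-sets. -/
def psi (f : ℝ × ℝ → ℝ × ℝ) (Q : ℕ → HSet) : ℕ → (ℝ × ℝ → ℝ × ℝ)
  | 0 => id
  | j + 1 => fun x => clampX (Q (j + 1)) (f (psi f Q j x))

section Chain

variable {f : ℝ × ℝ → ℝ × ℝ} {Q : ℕ → HSet}
variable (hcov : ∀ j, Covers f (Q j) (Q (j + 1)))

include hcov

lemma psi_mem (j : ℕ) : MapsTo (psi f Q j) (Q 0).box (Q j).box := by
  induction j with
  | zero => exact fun x hx => hx
  | succ j ih =>
    intro x hx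
    exact clampX_mem_box _ ((hcov j).1 (ih hx))

lemma psi_cont {S : Set (ℝ × ℝ)} (hf : ContinuousOn f S) (hS : ∀ j, (Q j).box ⊆ S) (j : ℕ) :
    ContinuousOn (psi f Q j) (Q 0).box := by
  induction j with
  | zero => exact continuousOn_id
  | succ j ih =>
    exact (continuous_clampX _).comp_continuousOn
      (hf.comp ih ((psi_mem hcov j).mono_right (hS j)))

lemma step_edge {j : ℕ} {y : ℝ × ℝ} (hy : y ∈ (Q j).leftEdge ∪ (Q j).rightEdge) :
    f y ∈ (Q (j + 1)).leftSide ∪ (Q (j + 1)).rightSide := by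
  rcases (hcov j).2 with ⟨h1, h2⟩ | ⟨h1, h2⟩ <;> rcases hy with hy | hy
  · exact Or.inl (h2 hy)
  · exact Or.inr (h1 hy)
  · exact Or.inr (h2 hy)
  · exact Or.inl (h1 hy)

lemma psi_edge_prop {x : ℝ × ℝ} {i : ℕ} (hx : psi f Q i x ∈ (Q i).leftEdge ∪ (Q i).rightEdge) :
    ∀ d : ℕ, psi f Q (i + d) x ∈ (Q (i + d)).leftEdge ∪ (Q (i + d)).rightEdge := by
  intro d
  induction d with
  | zero => exact hx
  | succ d ih =>
    have h1 := step_edge hcov ih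
    have : psi f Q (i + d + 1) x = clampX (Q (i + d + 1)) (f (psi f Q (i + d) x)) := rfl
    rw [show i + (d + 1) = i + d + 1 from rfl, this]
    rcases h1 with h | h
    · exact Or.inl (clampX_leftSide _ h)
    · exact Or.inr (clampX_rightSide _ h)

/-- Orientation dichotomy: `psi j` maps the edges of `Q 0` to the edges of `Q j`,
either preserving or exchanging them. -/
lemma psi_orient (j : ℕ) :
    ((∀ x ∈ (Q 0).leftEdge, psi f Q j x ∈ (Q j).leftEdge) ∧
     (∀ x ∈ (Q 0).rightEdge, psi f Q j x ∈ (Q j).rightEdge)) ∨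
    ((∀ x ∈ (Q 0).leftEdge, psi f Q j x ∈ (Q j).rightEdge) ∧
     (∀ x ∈ (Q 0).rightEdge, psi f Q j x ∈ (Q j).leftEdge)) := by
  induction j with
  | zero => exact Or.inl ⟨fun x hx => hx, fun x hx => hx⟩
  | succ j ih =>
    rcases (hcov j).2 with ⟨h1, h2⟩ | ⟨h1, h2⟩ <;> rcases ih with ⟨i1, i2⟩ | ⟨i1, i2⟩
    · exact Or.inl ⟨fun x hx => clampX_leftSide _ (h2 (i1 x hx)),
        fun x hx => clampX_rightSide _ (h1 (i2 x hx))⟩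
    · exact Or.inr ⟨fun x hx => clampX_rightSide _ (h1 (i1 x hx)),
        fun x hx => clampX_leftSide _ (h2 (i2 x hx))⟩
    · exact Or.inr ⟨fun x hx => clampX_rightSide _ (h2 (i1 x hx)),
        fun x hx => clampX_leftSide _ (h1 (i2 x hx))⟩
    · exact Or.inl ⟨fun x hx => clampX_leftSide _ (h1 (i1 x hx)),
        fun x hx => clampX_rightSide _ (h2 (i2 x hx))⟩

end Chain

end CRPO

/-- **Covering relations detect periodic orbits.** Given pairwise disjoint h-sets
`N₁, …, N_k`, a continuous map `f` on their union and a 0-1 transition matrix `M` such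
that `M i j = 1` implies `Nᵢ` `f`-covers `N_j`, every `M`-admissible biinfinite symbol
sequence which is periodic with principal period `n` is realized by a point `x ∈ |N_{c₀}|`
whose orbit follows the sequence, with `fⁿ(x) = x` and `n` the principal period of `x`. -/
theorem covering_relations_periodic_orbits
    (k : ℕ) (hk : 1 ≤ k) (N : Fin k → HSet)
    (hdisj : ∀ i j, i ≠ j → Disjoint (N i).box (N j).box)
    (f : ℝ × ℝ → ℝ × ℝ) (hf : ContinuousOn f (⋃ i, (N i).box))
    (M : Fin k → Fin k → ℕ) (hM01 : ∀ i j, M i j = 0 ∨ M i j = 1)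
    (hcov : ∀ i j, M i j = 1 → Covers f (N i) (N j))
    (c : ℤ → Fin k) (hc : ∀ j : ℤ, M (c j) (c (j + 1)) = 1)
    (n : ℕ) (hn : 0 < n)
    (hper : ∀ j : ℤ, c (j + (n : ℤ)) = c j)
    (hleast : ∀ m : ℕ, 0 < m → m < n → ∃ j : ℤ, c (j + (m : ℤ)) ≠ c j) :
    ∃ x ∈ (N (c 0)).box,
      (∀ j : ℕ, f^[j] x ∈ (N (c (j : ℤ))).box) ∧
      f^[n] x = x ∧
      ∀ m : ℕ, 0 < m → m < n → f^[m] x ≠ x := by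
  classical
  obtain ⟨m, rfl⟩ : ∃ m, n = m + 1 := ⟨n - 1, (Nat.succ_pred_eq_of_pos hn).symm⟩
  set Q : ℕ → HSet := fun j => N (c (j : ℤ)) with hQ
  have hcovseq : ∀ j : ℕ, Covers f (Q j) (Q (j + 1)) := by
    intro j
    have h := hcov _ _ (hc (j : ℤ))
    have e : ((j : ℤ) + 1) = ((j + 1 : ℕ) : ℤ) := by push_cast; ring
    rw [e] at h
    exact h
  have cper : ∀ (t : ℕ) (z : ℤ), c (z + t * ((m + 1 : ℕ) : ℤ)) = c z := by
    intro t
    induction t with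
    | zero => intro z; simp
    | succ t ih =>
      intro z
      have : z + ((t + 1 : ℕ) : ℤ) * ((m + 1 : ℕ) : ℤ)
          = (z + t * ((m + 1 : ℕ) : ℤ)) + ((m + 1 : ℕ) : ℤ) := by push_cast; ring
      rw [this, hper, ih]
  have hQn0 : Q (m + 1) = Q 0 := by
    rw [hQ]
    simp only
    congr 1
    have := cper 1 0
    simpa using this
  -- the Miranda map
  set g : ℝ × ℝ → ℝ × ℝ := fun x => f (CRPO.psi f Q m x) with hg
  have hS : ∀ j : ℕ, (Q j).box ⊆ ⋃ i, (N i).box := fun j => subset_iUnion_of_subset _ le_rfl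
  have hgc : ContinuousOn g (Q 0).box :=
    hf.comp (CRPO.psi_cont hcovseq hf hS m) ((CRPO.psi_mem hcovseq m).mono_right (hS m))
  have hgstrip : ∀ x ∈ (Q 0).box, g x ∈ (Q 0).strip := by
    intro x hx
    have := (hcovseq m).1 (CRPO.psi_mem hcovseq m hx)
    rwa [hQn0] at this
  have hgo :
      ((∀ x ∈ (Q 0).leftEdge, g x ∈ (Q 0).leftSide) ∧
       (∀ x ∈ (Q 0).rightEdge, g x ∈ (Q 0).rightSide)) ∨
      ((∀ x ∈ (Q 0).leftEdge, g x ∈ (Q 0).rightSide) ∧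
       (∀ x ∈ (Q 0).rightEdge, g x ∈ (Q 0).leftSide)) := by
    rcases (hcovseq m).2 with ⟨h1, h2⟩ | ⟨h1, h2⟩ <;>
      rcases CRPO.psi_orient hcovseq (f := f) m with ⟨i1, i2⟩ | ⟨i1, i2⟩
    · exact Or.inl ⟨fun x hx => hQn0 ▸ h2 (i1 x hx), fun x hx => hQn0 ▸ h1 (i2 x hx)⟩
    · exact Or.inr ⟨fun x hx => hQn0 ▸ h1 (i1 x hx), fun x hx => hQn0 ▸ h2 (i2 x hx)⟩
    · exact Or.inr ⟨fun x hx => hQn0 ▸ h2 (i1 x hx), fun x hx => hQn0 ▸ h1 (i2 x hx)⟩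
    · exact Or.inl ⟨fun x hx => hQn0 ▸ h1 (i1 x hx), fun x hx => hQn0 ▸ h2 (i2 x hx)⟩
  set A := (Q 0).a with hA
  set B := (Q 0).b with hB
  set C := (Q 0).c with hC
  set D := (Q 0).d with hD
  have hbox0 : (Q 0).box = Icc A B ×ˢ Icc C D := rfl
  -- find the fixed point of the clamped return map
  have hfix : ∃ x ∈ (Q 0).box, g x = x := by
    rcases hgo with ⟨ho1, ho2⟩ | ⟨ho1, ho2⟩
    · obtain ⟨p, hp, hz⟩ := CRPO.miranda A B C D (Q 0).hab (Q 0).hcd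
        (fun p => ((g p).1 - p.1, p.2 - (g p).2))
        (by
          apply ContinuousOn.prodMk
          · exact (hgc.fst.sub continuousOn_fst)
          · exact (continuousOn_snd.sub hgc.snd))
        (by
          intro y hy
          have hmem : ((A, y) : ℝ × ℝ) ∈ (Q 0).leftEdge := ⟨rfl, hy⟩
          have := ho1 _ hmem
          simpa using sub_neg.mpr (mem_Iio.mp this.1))
        (by
          intro y hy
          have hmem : ((B, y) : ℝ × ℝ) ∈ (Q 0).rightEdge := ⟨rfl, hy⟩
          have := ho2 _ hmem
          simpa using sub_pos.mpr (mem_Ioi.mp this.1))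
        (by
          intro x hx
          have hmem : ((x, C) : ℝ × ℝ) ∈ (Q 0).box := ⟨hx, le_refl C, (Q 0).hcd.le⟩
          have := hgstrip _ hmem
          simpa using sub_neg.mpr this.2.1)
        (by
          intro x hx
          have hmem : ((x, D) : ℝ × ℝ) ∈ (Q 0).box := ⟨hx, (Q 0).hcd.le, le_refl D⟩
          have := hgstrip _ hmem
          simpa using sub_pos.mpr this.2.2)
      refine ⟨p, hp, ?_⟩
      have h1 : (g p).1 - p.1 = 0 := congrArg Prod.fst hz
      have h2 : p.2 - (g p).2 = 0 := congrArg Prod.snd hz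
      exact Prod.ext (by linarith) (by linarith)
    · obtain ⟨p, hp, hz⟩ := CRPO.miranda A B C D (Q 0).hab (Q 0).hcd
        (fun p => (p.1 - (g p).1, p.2 - (g p).2))
        (by
          apply ContinuousOn.prodMk
          · exact (continuousOn_fst.sub hgc.fst)
          · exact (continuousOn_snd.sub hgc.snd))
        (by
          intro y hy
          have hmem : ((A, y) : ℝ × ℝ) ∈ (Q 0).leftEdge := ⟨rfl, hy⟩
          have h := mem_Ioi.mp (ho1 _ hmem).1
          have : A < (g (A, y)).1 := lt_trans (Q 0).hab h
          simpa using sub_neg.mpr this)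
        (by
          intro y hy
          have hmem : ((B, y) : ℝ × ℝ) ∈ (Q 0).rightEdge := ⟨rfl, hy⟩
          have h := mem_Iio.mp (ho2 _ hmem).1
          have : (g (B, y)).1 < B := lt_trans h (Q 0).hab
          simpa using sub_pos.mpr this)
        (by
          intro x hx
          have hmem : ((x, C) : ℝ × ℝ) ∈ (Q 0).box := ⟨hx, le_refl C, (Q 0).hcd.le⟩
          have := hgstrip _ hmem
          simpa using sub_neg.mpr this.2.1)
        (by
          intro x hx
          have hmem : ((x, D) : ℝ × ℝ) ∈ (Q 0).box := ⟨hx, (Q 0).hcd.le, le_refl D⟩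
          have := hgstrip _ hmem
          simpa using sub_pos.mpr this.2.2)
      refine ⟨p, hp, ?_⟩
      have h1 : p.1 - (g p).1 = 0 := congrArg Prod.fst hz
      have h2 : p.2 - (g p).2 = 0 := congrArg Prod.snd hz
      exact Prod.ext (by linarith) (by linarith)
  obtain ⟨x, hxbox, hxfix⟩ := hfix
  -- no point of the clamped orbit lies on an edge
  have h_noedge : ∀ i ≤ m, CRPO.psi f Q i x ∉ (Q i).leftEdge ∪ (Q i).rightEdge := by
    intro i hi hmem
    have hprop := CRPO.psi_edge_prop hcovseq hmem (m - i)
    rw [Nat.add_sub_cancel' hi] at hprop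
    have hside := CRPO.step_edge hcovseq hprop
    rw [hQn0] at hside
    have hx1 : x.1 ∈ Icc A B := hxbox.1
    rcases hside with h | h
    · have : x.1 < A := by rw [← hxfix]; exact h.1
      exact absurd hx1.1 (not_le.mpr this)
    · have : B < x.1 := by rw [← hxfix]; exact h.1
      exact absurd hx1.2 (not_le.mpr this)
  -- clamping is never active: psi is the true orbit
  have h_orbit : ∀ i ≤ m, CRPO.psi f Q i x = f^[i] x := by
    intro i hi
    induction i with
    | zero => rfl
    | succ i ih =>
      have hi' : i ≤ m := le_of_lt (Nat.lt_of_succ_le hi)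
      have hih := ih hi'
      have hstrip : f (CRPO.psi f Q i x) ∈ (Q (i + 1)).strip :=
        (hcovseq i).1 (CRPO.psi_mem hcovseq i hxbox)
      by_cases hin : (f (CRPO.psi f Q i x)).1 ∈ Icc (Q (i + 1)).a (Q (i + 1)).b
      · show CRPO.clampX (Q (i + 1)) (f (CRPO.psi f Q i x)) = f^[i + 1] x
        rw [CRPO.clampX_of_mem _ hin, hih, Function.iterate_succ_apply']
      · exfalso
        have hy2 : (f (CRPO.psi f Q i x)).2 ∈ Icc (Q (i+1)).c (Q (i+1)).d :=
          ⟨hstrip.2.1.le, hstrip.2.2.le⟩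
        have hside : f (CRPO.psi f Q i x) ∈ (Q (i+1)).leftSide ∪ (Q (i+1)).rightSide := by
          rcases not_and_or.mp (by rwa [mem_Icc] at hin) with h | h
          · exact Or.inl ⟨not_le.mp h, hy2⟩
          · exact Or.inr ⟨not_le.mp h, hy2⟩
        have hedge : CRPO.psi f Q (i + 1) x ∈ (Q (i+1)).leftEdge ∪ (Q (i+1)).rightEdge := by
          show CRPO.clampX (Q (i + 1)) (f (CRPO.psi f Q i x)) ∈ _
          rcases hside with h | h
          · exact Or.inl (CRPO.clampX_leftSide _ h)
          · exact Or.inr (CRPO.clampX_rightSide _ h)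
        exact h_noedge (i + 1) hi hedge
  have horbit_box : ∀ i ≤ m, f^[i] x ∈ (Q i).box := by
    intro i hi
    rw [← h_orbit i hi]
    exact CRPO.psi_mem hcovseq i hxbox
  have hfixn : f^[m + 1] x = x := by
    rw [Function.iterate_succ_apply', ← h_orbit m le_rfl]
    exact hxfix
  have hitern : ∀ q : ℕ, f^[(m + 1) * q] x = x := by
    intro q
    induction q with
    | zero => rfl
    | succ q ih =>
      have : (m + 1) * (q + 1) = (m + 1) + (m + 1) * q := by ring
      rw [this, Function.iterate_add_apply, ih, hfixn]
  have horbit_all : ∀ j : ℕ, f^[j] x ∈ (N (c (j : ℤ))).box := by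
    intro j
    have hdm : j = j % (m + 1) + (m + 1) * (j / (m + 1)) := by
      rw [Nat.mod_add_div]
    have hr : j % (m + 1) ≤ m := Nat.lt_succ_iff.mp (Nat.mod_lt j (Nat.succ_pos m))
    have hcj : c (j : ℤ) = c ((j % (m + 1) : ℕ) : ℤ) := by
      conv_lhs => rw [hdm]
      have : (((j % (m + 1) + (m + 1) * (j / (m + 1)) : ℕ)) : ℤ)
          = ((j % (m + 1) : ℕ) : ℤ) + ((j / (m + 1) : ℕ) : ℤ) * (((m + 1 : ℕ)) : ℤ) := by
        push_cast; ring
      rw [this, cper]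
    have h5 : f^[j] x = f^[j % (m + 1)] (f^[(m + 1) * (j / (m + 1))] x) := by
      conv_lhs => rw [hdm]
      rw [Function.iterate_add_apply]
    rw [hitern] at h5
    rw [hcj, h5]
    exact horbit_box _ hr
  refine ⟨x, ?_, horbit_all, hfixn, ?_⟩
  · have := horbit_box 0 (Nat.zero_le m)
    simpa [hQ] using this
  -- least period
  intro m' hm'0 hm'n hEq
  have hcc : ∀ j : ℕ, c ((j + m' : ℕ) : ℤ) = c (j : ℤ) := by
    intro j
    by_contra hne
    have h1 : f^[j + m'] x = f^[j] x := by
      rw [Function.iterate_add_apply, hEq]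
    have hmem1 : f^[j] x ∈ (N (c ((j + m' : ℕ) : ℤ))).box := h1 ▸ horbit_all (j + m')
    have hmem2 : f^[j] x ∈ (N (c (j : ℤ))).box := horbit_all j
    exact Set.disjoint_left.mp (hdisj _ _ hne) hmem1 hmem2
  obtain ⟨z, hz⟩ := hleast m' hm'0 hm'n
  set t : ℕ := z.natAbs with ht
  have htz : -z ≤ (t : ℤ) := by
    rw [ht]
    exact (Int.le_natAbs).trans_eq (by rw [Int.natAbs_neg])
  have htn : (t : ℤ) ≤ (t : ℤ) * ((m + 1 : ℕ) : ℤ) := by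
    have h1 : (1 : ℤ) ≤ ((m + 1 : ℕ) : ℤ) := by push_cast; omega
    nlinarith [Int.natCast_nonneg t]
  have hw0 : 0 ≤ z + (t : ℤ) * ((m + 1 : ℕ) : ℤ) := by linarith
  set w : ℤ := z + (t : ℤ) * ((m + 1 : ℕ) : ℤ) with hw
  have hne' : c (w + (m' : ℤ)) ≠ c w := by
    have e1 : w + (m' : ℤ) = (z + (m' : ℤ)) + (t : ℤ) * ((m + 1 : ℕ) : ℤ) := by rw [hw]; ring
    rw [e1, cper, hw, cper]
    exact hz
  set j : ℕ := w.toNat with hj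
  have hjw : (j : ℤ) = w := Int.toNat_of_nonneg hw0
  apply hne'
  have e2 : ((j + m' : ℕ) : ℤ) = w + (m' : ℤ) := by push_cast; rw [hjw]
  have e3 : ((j : ℕ) : ℤ) = w := hjw
  rw [← e2, ← e3]
  exact hcc j
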